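/- arXiv:quant-ph/0307220 — 3 statements merged into one kernel-verified Lean document; each statement's English description precedes it below -/
import Mathlib

section
/- Let g : E → ℝ be a real positive definite function on a group E with g(0) = 1. Then for any x ∈ E such that there exists z ∈ E with 2z = x, we have g(z) ≤ √((1 + g(x))/2) ≤ (g(x) + 3)/4. -/
/-- A real-valued function `g : E → ℝ` on an additive group is positive definite if for
every `k` and every `x_1, …, x_k ∈ E`, the matrix `(g (x i - x j))` is positive
semidefinite. -/
def IsPosDefFnReal {E : Type*} [AddGroup E] (g : E → ℝ) : Prop :=
  ∀ (k : ℕ) (x : Fin k → E),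
    (Matrix.of fun i j => g (x i - x j)).PosSemidef

theorem pd_fn_half_bound {E : Type*} [AddGroup E] (g : E → ℝ)
    (hg : IsPosDefFnReal g) (h0 : g 0 = 1) (x z : E) (hz : z + z = x) :
    g z ≤ Real.sqrt ((1 + g x) / 2) ∧
    Real.sqrt ((1 + g x) / 2) ≤ (g x + 3) / 4 := by
  have hzx : z - x = -z := by rw [← hz, sub_add_eq_sub_sub_swap, sub_self, zero_sub]
  have hxz : x - z = z := by rw [← hz, add_sub_cancel_right]
  have H := hg 3 ![0, z, x]
  have hherm := H.1
  have hsymz : g (-z) = g z := by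
    have h := congrFun (congrFun hherm 1) 0
    simpa [Matrix.conjTranspose_apply] using h
  have hsymx : g (-x) = g x := by
    have h := congrFun (congrFun hherm 2) 0
    simpa [Matrix.conjTranspose_apply] using h
  have hq := H.dotProduct_mulVec_nonneg ![1, -2 * g z, 1]
  simp [Matrix.mulVec, dotProduct, Fin.sum_univ_three, h0, hzx, hxz,
    hsymz, hsymx] at hq
  have hgz2 : g z ^ 2 ≤ (1 + g x) / 2 := by nlinarith [hq]
  have hnn : (0 : ℝ) ≤ (1 + g x) / 2 := le_trans (sq_nonneg (g z)) hgz2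
  have h1 : g z ≤ Real.sqrt ((1 + g x) / 2) := by
    calc g z ≤ |g z| := le_abs_self _
      _ = Real.sqrt (g z ^ 2) := (Real.sqrt_sq_eq_abs _).symm
      _ ≤ Real.sqrt ((1 + g x) / 2) := Real.sqrt_le_sqrt hgz2
  refine ⟨h1, ?_⟩
  nlinarith [Real.sq_sqrt hnn, Real.sqrt_nonneg ((1 + g x) / 2),
    sq_nonneg (Real.sqrt ((1 + g x) / 2) - 1)]
end

section
/- Let g : E → ℝ be a real positive definite function on a group E with g(0) = 1 and suppose g(w) ≤ ε for some w ∈ E and ε ≥ 0. If y ∈ E satisfies 2^k · y = w for some natural number k, then g(y) ≤ 1 − (1 − ε)/4^k. -/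
lemma g_even {E : Type*} [AddGroup E] (g : E → ℝ) (hg : IsPosDefFnReal g) (x : E) :
    g (-x) = g x := by
  have h := (hg 2 ![0, x]).1
  have h2 := congrFun (congrFun h 1) 0
  simp [Matrix.conjTranspose] at h2; simpa using h2

lemma halving {E : Type*} [AddGroup E] (g : E → ℝ) (hg : IsPosDefFnReal g)
    (h0 : g 0 = 1) (y : E) : g y ≤ (3 + g (2 • y)) / 4 := by
  have h := (hg 3 ![0, y, 2 • y]).dotProduct_mulVec_nonneg ![1, -2, 1]
  have e1 : y - 2 • y = -y := by
    rw [two_nsmul, sub_eq_add_neg, neg_add_rev, ← add_assoc, add_neg_cancel, zero_add]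
  have e2 : (2 : ℕ) • y - y = y := by rw [two_nsmul, add_sub_cancel_right]
  have e3 : g (-y) = g y := g_even g hg y
  have e4 : g (-(2 • y)) = g (2 • y) := g_even g hg (2 • y)
  simp only [dotProduct, Matrix.mulVec, Fin.sum_univ_three, Matrix.cons_val_zero,
    Matrix.cons_val_one, Matrix.head_cons, Matrix.cons_val_two, Matrix.tail_cons,
    Matrix.of_apply, zero_sub, sub_zero, sub_self, e1, e2, e3, e4, h0,
    Pi.star_apply, star_trivial] at h
  linarith

theorem pd_fn_iterated_halving {E : Type*} [AddGroup E] (g : E → ℝ)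
    (hg : IsPosDefFnReal g) (h0 : g 0 = 1) (w y : E) (ε : ℝ) (hε : 0 ≤ ε)
    (hw : g w ≤ ε) (k : ℕ) (hy : (2 ^ k : ℕ) • y = w) :
    g y ≤ 1 - (1 - ε) / 4 ^ k := by
  induction k generalizing y with
  | zero =>
    simp only [pow_zero, one_smul] at hy
    subst hy
    simpa using hw
  | succ k ih =>
    have hy' : (2 ^ k : ℕ) • ((2 : ℕ) • y) = w := by
      have hp : (2 ^ (k + 1) : ℕ) = 2 * 2 ^ k := pow_succ' 2 k
      rw [hp, mul_nsmul] at hy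
      exact hy
    have h1 := ih ((2 : ℕ) • y) hy'
    have h2 := halving g hg h0 y
    have heq : (1 - ε) / (4 : ℝ) ^ (k + 1) = ((1 - ε) / 4 ^ k) / 4 := by
      rw [pow_succ]; ring
    rw [heq]
    linarith
end

section
/- Let B(n) ⊂ ℝⁿ be the ball of radius n^{−10} + n^{−11} and let A ⊂ ℝⁿ be the 'annular slab' {z : |‖P_{y⊥}(z)‖ − n^{−10}| ≤ n^{−100}/2 and ‖P_y(z)‖ ≤ n^{−100}/2} for a fixed non-zero vector y. Then vol(A)/vol(B(n)) ≥ n^{−180}/10 for all sufficiently large n. -/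
open MeasureTheory Metric

noncomputable def eTail (m : ℕ) (x : EuclideanSpace ℝ (Fin (m+1))) :
    EuclideanSpace ℝ (Fin m) := WithLp.toLp 2 (fun i : Fin m => x i.succ)

lemma slab_aux (m : ℕ) (G : Set ℝ) (H : Set (EuclideanSpace ℝ (Fin m)))
    (hG : MeasurableSet G) (hH : MeasurableSet H) :
    MeasurableSet {x : EuclideanSpace ℝ (Fin (m+1)) | x 0 ∈ G ∧ eTail m x ∈ H} ∧
    volume {x : EuclideanSpace ℝ (Fin (m+1)) | x 0 ∈ G ∧ eTail m x ∈ H}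
      = volume G * volume H := by
  have e1 := EuclideanSpace.volume_preserving_symm_measurableEquiv_toLp (Fin (m+1))
  have e2 := volume_preserving_piFinSuccAbove (fun _ : Fin (m+1) => ℝ) 0
  have e3 := EuclideanSpace.volume_preserving_symm_measurableEquiv_toLp (Fin m)
  set Hpi : Set (Fin m → ℝ) := ((MeasurableEquiv.toLp 2 (Fin m → ℝ)).symm).symm ⁻¹' H with hHpidef
  have hHpi : MeasurableSet Hpi := ((MeasurableEquiv.toLp 2 (Fin m → ℝ)).symm).symm.measurable hH
  have hset : {x : EuclideanSpace ℝ (Fin (m+1)) | x 0 ∈ G ∧ eTail m x ∈ H}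
      = ((MeasurableEquiv.toLp 2 (Fin (m+1) → ℝ)).symm) ⁻¹'
        ((MeasurableEquiv.piFinSuccAbove (fun _ : Fin (m+1) => ℝ) 0) ⁻¹' (G ×ˢ Hpi)) := by
    ext x
    have hr : (0:Fin (m+1)).removeNth (x : Fin (m+1) → ℝ) = (eTail m x).ofLp := by
      funext j
      simp [Fin.removeNth, Fin.zero_succAbove, eTail]
    simp only [Set.mem_preimage, Set.mem_setOf_eq, Set.mem_prod,
      MeasurableEquiv.piFinSuccAbove_apply, Fin.insertNthEquiv_symm_apply]
    rw [show ((MeasurableEquiv.toLp 2 (Fin (m+1) → ℝ)).symm) x = (x : Fin (m+1) → ℝ) from rfl, hr]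
    exact Iff.rfl
  have hmeas : MeasurableSet {x : EuclideanSpace ℝ (Fin (m+1)) | x 0 ∈ G ∧ eTail m x ∈ H} := by
    rw [hset]
    exact ((MeasurableEquiv.toLp 2 (Fin (m+1) → ℝ)).symm).measurable
      ((MeasurableEquiv.piFinSuccAbove (fun _ : Fin (m+1) => ℝ) 0).measurable (hG.prod hHpi))
  refine ⟨hmeas, ?_⟩
  rw [hset, e1.measure_preimage, e2.measure_preimage, Measure.volume_eq_prod, Measure.prod_prod]
  · congr 1
    exact ((MeasurePreserving.symm _ e3).measure_preimage hH.nullMeasurableSet)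
  · exact (hG.prod hHpi).nullMeasurableSet
  · exact ((MeasurableEquiv.piFinSuccAbove (fun _ : Fin (m+1) => ℝ) 0).measurable (hG.prod hHpi)).nullMeasurableSet

lemma rot_lemma (m : ℕ) (y : EuclideanSpace ℝ (Fin (m+1))) (hy : y ≠ 0) :
    ∃ b : OrthonormalBasis (Fin (m+1)) ℝ (EuclideanSpace ℝ (Fin (m+1))),
      ∀ z : EuclideanSpace ℝ (Fin (m+1)),
        ‖((inner ℝ y z : ℝ) / ‖y‖ ^ 2) • y‖ = |b.repr z 0| ∧
        ‖z - ((inner ℝ y z : ℝ) / ‖y‖ ^ 2) • y‖ = ‖eTail m (b.repr z)‖ := by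
  have hyn : ‖y‖ ≠ 0 := norm_ne_zero_iff.mpr hy
  set u : EuclideanSpace ℝ (Fin (m+1)) := ‖y‖⁻¹ • y with hu_def
  have hu : ‖u‖ = 1 := norm_smul_inv_norm hy
  have horth : Orthonormal ℝ (({0} : Set (Fin (m+1))).restrict (fun _ => u)) := by
    refine ⟨fun i => hu, ?_⟩
    intro i j hij
    exfalso
    apply hij
    have hi := i.2
    have hj := j.2
    simp only [Set.mem_singleton_iff] at hi hj
    exact Subtype.ext (hi.trans hj.symm)
  have card : Module.finrank ℝ (EuclideanSpace ℝ (Fin (m+1))) = Fintype.card (Fin (m+1)) := by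
    simp [finrank_euclideanSpace]
  obtain ⟨b, hb⟩ := horth.exists_orthonormalBasis_extension_of_card_eq card
  have hb0 : b 0 = u := hb 0 rfl
  refine ⟨b, fun z => ?_⟩
  have hyy : y = ‖y‖ • u := by
    rw [hu_def, smul_smul, mul_inv_cancel₀ hyn, one_smul]
  have hproj : ((inner ℝ y z : ℝ) / ‖y‖ ^ 2) • y = (inner ℝ u z : ℝ) • u := by
    rw [hu_def, real_inner_smul_left, smul_smul]
    congr 1
    rw [div_eq_mul_inv, sq, mul_inv]
    ring
  have hbz : (b.repr z) 0 = (inner ℝ u z : ℝ) := by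
    rw [← hb0, b.repr_apply_apply]
  constructor
  · rw [hproj, norm_smul, hu, mul_one, hbz, Real.norm_eq_abs]
  · rw [hproj, ← b.repr.norm_map (z - (inner ℝ u z : ℝ) • u), map_sub,
      LinearIsometryEquiv.map_smul, ← hb0, OrthonormalBasis.repr_self, hb0, ← hbz]
    rw [EuclideanSpace.norm_eq, EuclideanSpace.norm_eq]
    congr 1
    rw [Fin.sum_univ_succ]
    have h0 : (b.repr z - b.repr z 0 • EuclideanSpace.single 0 (1:ℝ) : EuclideanSpace ℝ (Fin (m+1))) 0 = 0 := by
      simp [EuclideanSpace.single_apply]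
    have hsucc : ∀ i : Fin m, (b.repr z - b.repr z 0 • EuclideanSpace.single 0 (1:ℝ) : EuclideanSpace ℝ (Fin (m+1))) i.succ
        = b.repr z i.succ := by
      intro i
      simp [EuclideanSpace.single_apply, (Fin.succ_ne_zero i)]
    rw [h0]
    simp only [norm_zero, ne_eq, OfNat.ofNat_ne_zero, not_false_eq_true, zero_pow, zero_add]
    refine Finset.sum_congr rfl fun i _ => ?_
    rw [hsucc i]
    simp [eTail]

lemma coord_tail_le (m : ℕ) (x : EuclideanSpace ℝ (Fin (m+1))) :
    |x 0| ≤ ‖x‖ ∧ ‖eTail m x‖ ≤ ‖x‖ := by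
  have hsum : ∑ i : Fin (m+1), ‖x i‖ ^ 2 = ‖x 0‖ ^ 2 + ∑ i : Fin m, ‖x i.succ‖ ^ 2 :=
    Fin.sum_univ_succ _
  have htail_nonneg : (0:ℝ) ≤ ∑ i : Fin m, ‖x i.succ‖ ^ 2 :=
    Finset.sum_nonneg fun i _ => sq_nonneg _
  constructor
  · rw [EuclideanSpace.norm_eq, hsum]
    calc |x 0| = Real.sqrt (‖x 0‖ ^ 2) := by
          rw [Real.sqrt_sq_eq_abs, Real.norm_eq_abs, abs_abs]
      _ ≤ _ := Real.sqrt_le_sqrt (by linarith)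
  · rw [EuclideanSpace.norm_eq, EuclideanSpace.norm_eq, hsum]
    have : ∑ i : Fin m, ‖eTail m x i‖ ^ 2 = ∑ i : Fin m, ‖x i.succ‖ ^ 2 := by
      refine Finset.sum_congr rfl fun i _ => ?_
      simp [eTail]
    rw [this]
    exact Real.sqrt_le_sqrt (by nlinarith [sq_nonneg ‖x 0‖])

set_option maxHeartbeats 1000000 in
theorem annular_slab_volume_ratio :
    ∃ N : ℕ, ∀ n : ℕ, N ≤ n →
      ∀ y : EuclideanSpace ℝ (Fin n), y ≠ 0 →
        (volume {z : EuclideanSpace ℝ (Fin n) |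
            |‖z - (((inner ℝ y z : ℝ) / ‖y‖ ^ 2) • y)‖ - (n : ℝ) ^ (-10 : ℤ)| ≤
              (n : ℝ) ^ (-100 : ℤ) / 2 ∧
            ‖((inner ℝ y z : ℝ) / ‖y‖ ^ 2) • y‖ ≤ (n : ℝ) ^ (-100 : ℤ) / 2}).toReal /
          (volume (Metric.closedBall (0 : EuclideanSpace ℝ (Fin n))
            ((n : ℝ) ^ (-10 : ℤ) + (n : ℝ) ^ (-11 : ℤ)))).toReal ≥
        (n : ℝ) ^ (-180 : ℤ) / 10 := by
  refine ⟨10, fun n hn y hy => ?_⟩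
  obtain ⟨k, rfl⟩ : ∃ k, n = k + 3 := ⟨n - 3, by omega⟩
  set t : ℝ := ((k + 3 : ℕ) : ℝ) with ht
  have ht10 : (10:ℝ) ≤ t := by
    rw [ht]; push_cast; have : (10:ℕ) ≤ k + 3 := hn; exact_mod_cast this
  have ht0 : (0:ℝ) < t := by linarith
  have ht1 : (1:ℝ) ≤ t := by linarith
  set r : ℝ := t ^ (-10 : ℤ) with hr_def
  set ε : ℝ := t ^ (-100 : ℤ) / 2 with hε_def
  set R : ℝ := t ^ (-10 : ℤ) + t ^ (-11 : ℤ) with hR_def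
  have hr0 : (0:ℝ) < r := zpow_pos ht0 _
  have hε0 : (0:ℝ) < ε := by rw [hε_def]; positivity
  -- ε ≤ r/2
  have hεr2 : ε ≤ r / 2 := by
    rw [hε_def, hr_def]
    have : t ^ (-100 : ℤ) ≤ t ^ (-10 : ℤ) := zpow_le_zpow_right₀ ht1 (by norm_num)
    linarith
  have hrε0 : (0:ℝ) < r - ε := by linarith
  -- get the rotation
  obtain ⟨b, hb⟩ := rot_lemma (k+2) y hy
  -- the annulus
  set H : Set (EuclideanSpace ℝ (Fin (k+2))) := closedBall 0 (r+ε) \ ball 0 (r-ε) with hH_def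
  have hHmeas : MeasurableSet H := measurableSet_closedBall.diff measurableSet_ball
  have hA : {z : EuclideanSpace ℝ (Fin (k+3)) |
        |‖z - (((inner ℝ y z : ℝ) / ‖y‖ ^ 2) • y)‖ - r| ≤ ε ∧
        ‖((inner ℝ y z : ℝ) / ‖y‖ ^ 2) • y‖ ≤ ε}
      = ⇑b.repr ⁻¹' {x : EuclideanSpace ℝ (Fin (k+2+1)) |
          x 0 ∈ Set.Icc (-ε) ε ∧ eTail (k+2) x ∈ H} := by
    ext z
    obtain ⟨h1, h2⟩ := hb z
    simp only [Set.mem_setOf_eq, Set.mem_preimage, Set.mem_Icc, ← abs_le]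
    rw [h1, h2, hH_def]
    simp only [Set.mem_diff, mem_closedBall_zero_iff, mem_ball_zero_iff, not_lt, abs_le]
    constructor
    · rintro ⟨⟨u1, u2⟩, u3⟩
      exact ⟨u3, by linarith, by linarith⟩
    · rintro ⟨u3, u1, u2⟩
      exact ⟨⟨by linarith, by linarith⟩, u3⟩
  -- volume of the slab
  have hslab := slab_aux (k+2) (Set.Icc (-ε) ε) H measurableSet_Icc hHmeas
  have hvolA : volume {z : EuclideanSpace ℝ (Fin (k+3)) |
        |‖z - (((inner ℝ y z : ℝ) / ‖y‖ ^ 2) • y)‖ - r| ≤ ε ∧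
        ‖((inner ℝ y z : ℝ) / ‖y‖ ^ 2) • y‖ ≤ ε}
      = ENNReal.ofReal (2*ε) * volume H := by
    rw [hA, b.measurePreserving_repr.measure_preimage hslab.1.nullMeasurableSet, hslab.2,
      Real.volume_Icc, show ε - -ε = 2*ε by ring]
  -- unit ball volumes
  set ω : ENNReal := volume (closedBall (0 : EuclideanSpace ℝ (Fin (k+2))) 1) with hω_def
  set Ω : ENNReal := volume (closedBall (0 : EuclideanSpace ℝ (Fin (k+3))) 1) with hΩ_def
  have hcbm : ∀ s : ℝ, 0 ≤ s →
      volume (closedBall (0 : EuclideanSpace ℝ (Fin (k+2))) s)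
        = ENNReal.ofReal (s ^ (k+2)) * ω := by
    intro s hs
    rw [hω_def, Measure.addHaar_closedBall' volume _ hs, finrank_euclideanSpace_fin]
  have hcbn : volume (closedBall (0 : EuclideanSpace ℝ (Fin (k+3))) R)
      = ENNReal.ofReal (R ^ (k+3)) * Ω := by
    rw [hΩ_def, Measure.addHaar_closedBall' volume _ (by rw [hR_def]; positivity),
      finrank_euclideanSpace_fin]
  -- annulus volume lower bound
  have hpow_le : (r-ε) ^ (k+2) ≤ (r+ε) ^ (k+2) :=
    pow_le_pow_left₀ (by linarith) (by linarith) _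
  have hω_fin : ω ≠ ⊤ := measure_closedBall_lt_top.ne
  have hΩ_fin : Ω ≠ ⊤ := measure_closedBall_lt_top.ne
  have hvolH_le : volume H ≤ volume (closedBall (0 : EuclideanSpace ℝ (Fin (k+2))) (r+ε)) :=
    measure_mono Set.diff_subset
  have hvolH_fin : volume H ≠ ⊤ := (hvolH_le.trans_lt measure_closedBall_lt_top).ne
  have hvolH_ge : ENNReal.ofReal ((r+ε)^(k+2) - (r-ε)^(k+2)) * ω ≤ volume H := by
    rw [hH_def, measure_diff (ball_subset_closedBall.trans
        (closedBall_subset_closedBall (by linarith)))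
        measurableSet_ball.nullMeasurableSet measure_ball_lt_top.ne]
    rw [hcbm (r+ε) (by linarith)]
    have h1 : volume (ball (0 : EuclideanSpace ℝ (Fin (k+2))) (r-ε))
        ≤ ENNReal.ofReal ((r-ε)^(k+2)) * ω :=
      (measure_mono ball_subset_closedBall).trans_eq (hcbm (r-ε) (by linarith))
    calc ENNReal.ofReal ((r+ε)^(k+2) - (r-ε)^(k+2)) * ω
        = (ENNReal.ofReal ((r+ε)^(k+2)) - ENNReal.ofReal ((r-ε)^(k+2))) * ω := by
          rw [ENNReal.ofReal_sub _ (by positivity)]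
      _ = ENNReal.ofReal ((r+ε)^(k+2)) * ω - ENNReal.ofReal ((r-ε)^(k+2)) * ω := by
          rw [ENNReal.sub_mul (fun _ _ => hω_fin)]
      _ ≤ ENNReal.ofReal ((r+ε)^(k+2)) * ω
            - volume (ball (0 : EuclideanSpace ℝ (Fin (k+2))) (r-ε)) :=
          tsub_le_tsub_left h1 _
  -- cylinder bound
  have hcyl : Ω ≤ ENNReal.ofReal 2 * ω := by
    have hsub2 : closedBall (0 : EuclideanSpace ℝ (Fin (k+3))) 1
        ⊆ {x : EuclideanSpace ℝ (Fin (k+2+1)) |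
            x 0 ∈ Set.Icc (-1:ℝ) 1 ∧ eTail (k+2) x ∈ closedBall 0 1} := by
      intro x hx
      rw [mem_closedBall_zero_iff] at hx
      obtain ⟨h1, h2⟩ := coord_tail_le (k+2) x
      exact ⟨Set.mem_Icc.mpr (abs_le.mp (h1.trans hx)),
        mem_closedBall_zero_iff.mpr (h2.trans hx)⟩
    have hs := slab_aux (k+2) (Set.Icc (-1:ℝ) 1)
      (closedBall 0 1) measurableSet_Icc measurableSet_closedBall
    calc Ω ≤ volume {x : EuclideanSpace ℝ (Fin (k+2+1)) |
            x 0 ∈ Set.Icc (-1:ℝ) 1 ∧ eTail (k+2) x ∈ closedBall 0 1} := measure_mono hsub2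
      _ = volume (Set.Icc (-1:ℝ) 1) * ω := by rw [hs.2, hω_def]
      _ = ENNReal.ofReal 2 * ω := by rw [Real.volume_Icc]; norm_num
  -- real versions
  set w : ℝ := ω.toReal with hw_def
  set W : ℝ := Ω.toReal with hW_def
  have hw0 : 0 < w := by
    rw [hw_def]
    refine ENNReal.toReal_pos ?_ hω_fin
    exact ((measure_ball_pos volume _ one_pos).trans_le
      (measure_mono ball_subset_closedBall)).ne'
  have hW0 : 0 < W := by
    rw [hW_def]
    refine ENNReal.toReal_pos ?_ hΩ_fin
    exact ((measure_ball_pos volume _ one_pos).trans_le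
      (measure_mono ball_subset_closedBall)).ne'
  have hW2w : W ≤ 2 * w := by
    have := ENNReal.toReal_mono (by finiteness) hcyl
    rwa [ENNReal.toReal_mul, ENNReal.toReal_ofReal (by norm_num : (0:ℝ) ≤ 2)] at this
  -- numerator lower bound in ℝ
  have hA_lower : 2*ε * (((r+ε)^(k+2) - (r-ε)^(k+2)) * w)
      ≤ (volume {z : EuclideanSpace ℝ (Fin (k+3)) |
        |‖z - (((inner ℝ y z : ℝ) / ‖y‖ ^ 2) • y)‖ - r| ≤ ε ∧
        ‖((inner ℝ y z : ℝ) / ‖y‖ ^ 2) • y‖ ≤ ε}).toReal := by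
    rw [hvolA, ENNReal.toReal_mul, ENNReal.toReal_ofReal (by linarith)]
    have h2 : ((r+ε)^(k+2) - (r-ε)^(k+2)) * w ≤ (volume H).toReal := by
      have := ENNReal.toReal_mono hvolH_fin hvolH_ge
      rwa [ENNReal.toReal_mul, ENNReal.toReal_ofReal (by linarith)] at this
    have h3 : 0 ≤ 2*ε := by linarith
    exact mul_le_mul_of_nonneg_left h2 h3
  -- denominator value in ℝ
  have hB_val : (volume (closedBall (0 : EuclideanSpace ℝ (Fin (k+3))) R)).toReal
      = R ^ (k+3) * W := by
    rw [hcbn, ENNReal.toReal_mul, ENNReal.toReal_ofReal (by rw [hR_def]; positivity)]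
  have hR0 : 0 < R := by rw [hR_def]; positivity
  have hB_pos : 0 < (volume (closedBall (0 : EuclideanSpace ℝ (Fin (k+3))) R)).toReal := by
    rw [hB_val]; positivity
  -- key real inequalities
  -- F1 : Bernoulli difference
  have F1 : 2*((k:ℝ)+2)*ε*(r-ε)^(k+1) ≤ (r+ε)^(k+2) - (r-ε)^(k+2) := by
    have hs0 : (0:ℝ) ≤ 2*ε/(r-ε) := by positivity
    have h1 : 1 + ((k:ℝ)+2) * (2*ε/(r-ε)) ≤ (1 + 2*ε/(r-ε)) ^ (k+2) := by
      have := one_add_mul_le_pow (a := 2*ε/(r-ε)) (by linarith) (k+2)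
      push_cast at this
      linarith
    have h2 : (r-ε)^(k+2) * (1 + ((k:ℝ)+2) * (2*ε/(r-ε)))
        ≤ (r-ε)^(k+2) * (1 + 2*ε/(r-ε)) ^ (k+2) :=
      mul_le_mul_of_nonneg_left h1 (by positivity)
    have h3 : (r-ε)^(k+2) * (1 + 2*ε/(r-ε)) ^ (k+2) = (r+ε)^(k+2) := by
      rw [← mul_pow]
      congr 1
      field_simp
      ring
    have h4 : (r-ε)^(k+2) * (1 + ((k:ℝ)+2) * (2*ε/(r-ε)))
        = (r-ε)^(k+2) + 2*((k:ℝ)+2)*ε*(r-ε)^(k+1) := by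
      have hb : (r-ε)^(k+2) = (r-ε)^(k+1) * (r-ε) := pow_succ _ _
      rw [hb]
      field_simp
    linarith
  -- F2 : (r-ε)^(k+1) ≥ r^(k+1)/2
  have hεrr : ε / r = t ^ (-90 : ℤ) / 2 := by
    rw [hε_def, hr_def, show (-90:ℤ) = -100 - (-10) by norm_num, zpow_sub₀ ht0.ne']
    ring
  have h89le : t ^ (-89 : ℤ) ≤ 1 := by
    rw [show (-89:ℤ) = -(89:ℕ) by norm_num, zpow_neg, zpow_natCast]
    exact inv_le_one_of_one_le₀ (one_le_pow₀ ht1)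
  have hsmall : ((k:ℝ)+1) * (ε/r) ≤ 1/2 := by
    rw [hεrr]
    have hk1t : ((k:ℝ)+1) ≤ t := by rw [ht]; push_cast; linarith
    have h1 : ((k:ℝ)+1) * (t ^ (-90:ℤ)/2) ≤ t * (t ^ (-90:ℤ)/2) :=
      mul_le_mul_of_nonneg_right hk1t (by positivity)
    have h2 : t * (t ^ (-90:ℤ)/2) = t ^ (-89:ℤ)/2 := by
      rw [show (-89:ℤ) = 1 + -90 by norm_num, zpow_add₀ ht0.ne', zpow_one]
      ring
    linarith
  have hεr_half : ε/r ≤ 1/2 := by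
    have hεr_pos : (0:ℝ) ≤ ε/r := by positivity
    have h0 : ε/r ≤ ((k:ℝ)+1)*(ε/r) := le_mul_of_one_le_left hεr_pos (by have : (0:ℝ) ≤ (k:ℝ) := Nat.cast_nonneg k; linarith)
    linarith
  have F2 : r^(k+1) / 2 ≤ (r-ε)^(k+1) := by
    have hB' : 1 - ((k:ℝ)+1)*(ε/r) ≤ (1 - ε/r)^(k+1) := by
      have h := one_add_mul_le_pow (a := -(ε/r)) (by linarith) (k+1)
      push_cast at h
      calc 1 - ((k:ℝ)+1)*(ε/r) = 1 + ((k:ℝ)+1) * (-(ε/r)) := by ring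
        _ ≤ (1 + -(ε/r))^(k+1) := h
        _ = (1 - ε/r)^(k+1) := by rw [← sub_eq_add_neg]
    have hfact : r * (1 - ε/r) = r - ε := by field_simp
    calc r^(k+1) / 2 = r^(k+1) * (1/2) := by ring
      _ ≤ r^(k+1) * (1 - ((k:ℝ)+1)*(ε/r)) :=
          mul_le_mul_of_nonneg_left (by linarith) (by positivity)
      _ ≤ r^(k+1) * (1 - ε/r)^(k+1) :=
          mul_le_mul_of_nonneg_left hB' (by positivity)
      _ = (r-ε)^(k+1) := by rw [← mul_pow, hfact]
  -- F3 : R^(k+3) ≤ 3 r^(k+3)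
  have hR_eq : R = r * (1 + 1/t) := by
    have h11 : t ^ (-11:ℤ) = r / t := by
      rw [hr_def, show (-11:ℤ) = -10 - 1 by norm_num, zpow_sub₀ ht0.ne', zpow_one]
    rw [hR_def, ← hr_def, h11]
    field_simp
  have F3 : R^(k+3) ≤ 3 * r^(k+3) := by
    have h1 : (1:ℝ) + 1/t ≤ Real.exp (1/t) := by
      have := Real.add_one_le_exp (1/t); linarith
    have h2 : ((1:ℝ)+1/t)^(k+3) ≤ Real.exp (1/t)^(k+3) :=
      pow_le_pow_left₀ (by positivity) h1 _
    have h3 : Real.exp (1/t)^(k+3) = Real.exp (((k:ℝ)+3)*(1/t)) := by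
      rw [← Real.exp_nat_mul]
      push_cast
      ring_nf
    have h4 : ((k:ℝ)+3)*(1/t) = 1 := by
      rw [ht]; push_cast; field_simp
    have h5 : ((1:ℝ)+1/t)^(k+3) ≤ 3 := by
      rw [h3, h4] at h2
      have := Real.exp_one_lt_d9
      linarith
    calc R^(k+3) = r^(k+3) * ((1:ℝ)+1/t)^(k+3) := by rw [hR_eq, mul_pow]
      _ ≤ r^(k+3) * 3 := mul_le_mul_of_nonneg_left h5 (by positivity)
      _ = 3 * r^(k+3) := by ring
  -- exponent algebra
  have Fexp : r^(k+3) = t^(-20:ℤ) * r^(k+1) := by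
    rw [show k+3 = (k+1)+2 by ring, pow_add, hr_def,
      show (t ^ (-10:ℤ))^2 = t ^ (-20:ℤ) by
        rw [← zpow_natCast (t ^ (-10:ℤ)) 2, ← zpow_mul]; norm_num]
    ring
  have εsq : ε^2 = t^(-200:ℤ)/4 := by
    rw [hε_def, div_pow,
      show (t ^ (-100:ℤ))^2 = t ^ (-200:ℤ) by
        rw [← zpow_natCast (t ^ (-100:ℤ)) 2, ← zpow_mul]; norm_num]
    norm_num
  have tsplit : t^(-180:ℤ) * t^(-20:ℤ) = t^(-200:ℤ) := by
    rw [← zpow_add₀ ht0.ne']; norm_num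
  have ht180 : (0:ℝ) < t^(-180:ℤ) := zpow_pos ht0 _
  have ht20 : (0:ℝ) < t^(-20:ℤ) := zpow_pos ht0 _
  -- final inequality
  rw [ge_iff_le, le_div_iff₀ hB_pos, hB_val]
  have hc : t^(-180:ℤ)/10 * (3*r^(k+3)) * 2 ≤ 2*((k:ℝ)+2)*ε^2*r^(k+1) := by
    have hq : (0:ℝ) ≤ t^(-180:ℤ)*t^(-20:ℤ)*r^(k+1) := by positivity
    have hk2 : (2:ℝ) ≤ (k:ℝ)+2 := by have : (0:ℝ) ≤ (k:ℝ) := Nat.cast_nonneg k; linarith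
    calc t^(-180:ℤ)/10 * (3*r^(k+3)) * 2
        = (3/5)*(t^(-180:ℤ)*t^(-20:ℤ)*r^(k+1)) := by rw [Fexp]; ring
      _ ≤ (((k:ℝ)+2)/2)*(t^(-180:ℤ)*t^(-20:ℤ)*r^(k+1)) :=
          mul_le_mul_of_nonneg_right (by linarith) hq
      _ = 2*((k:ℝ)+2)*(t^(-200:ℤ)/4)*r^(k+1) := by rw [← tsplit]; ring
      _ = 2*((k:ℝ)+2)*ε^2*r^(k+1) := by rw [εsq]
  have step1 : t^(-180:ℤ)/10 * (R^(k+3) * W) ≤ t^(-180:ℤ)/10 * R^(k+3) * (2*w) := by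
    have : t^(-180:ℤ)/10 * (R^(k+3) * W) = t^(-180:ℤ)/10 * R^(k+3) * W := by ring
    rw [this]
    exact mul_le_mul_of_nonneg_left hW2w (by positivity)
  have step2 : t^(-180:ℤ)/10 * R^(k+3) * (2*w)
      ≤ t^(-180:ℤ)/10 * (3*r^(k+3)) * (2*w) := by
    apply mul_le_mul_of_nonneg_right _ (by positivity)
    exact mul_le_mul_of_nonneg_left F3 (by positivity)
  have step3 : t^(-180:ℤ)/10 * (3*r^(k+3)) * (2*w)
      ≤ (2*((k:ℝ)+2)*ε^2*r^(k+1)) * w := by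
    calc t^(-180:ℤ)/10 * (3*r^(k+3)) * (2*w)
        = (t^(-180:ℤ)/10 * (3*r^(k+3)) * 2) * w := by ring
      _ ≤ (2*((k:ℝ)+2)*ε^2*r^(k+1)) * w := mul_le_mul_of_nonneg_right hc (le_of_lt hw0)
  have step4 : (2*((k:ℝ)+2)*ε^2*r^(k+1)) * w
      ≤ 2*ε * (((r+ε)^(k+2) - (r-ε)^(k+2)) * w) := by
    have hΔ : 2*((k:ℝ)+2)*ε*(r^(k+1)/2) ≤ (r+ε)^(k+2) - (r-ε)^(k+2) := by
      have h1 : 2*((k:ℝ)+2)*ε*(r^(k+1)/2) ≤ 2*((k:ℝ)+2)*ε*(r-ε)^(k+1) :=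
        mul_le_mul_of_nonneg_left F2 (by positivity)
      linarith
    calc (2*((k:ℝ)+2)*ε^2*r^(k+1)) * w
        = (2*ε) * ((2*((k:ℝ)+2)*ε*(r^(k+1)/2)) * w) := by ring
      _ ≤ (2*ε) * (((r+ε)^(k+2) - (r-ε)^(k+2)) * w) := by
          apply mul_le_mul_of_nonneg_left _ (by positivity)
          exact mul_le_mul_of_nonneg_right hΔ (le_of_lt hw0)
  calc t^(-180:ℤ)/10 * (R^(k+3) * W)
      ≤ 2*ε * (((r+ε)^(k+2) - (r-ε)^(k+2)) * w) :=
        le_trans step1 (le_trans step2 (le_trans step3 step4))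
    _ ≤ _ := hA_lower
end
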